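/- Let b ∈ ℓ¹_ν (extended symmetrically to negative indices) and define Q_k(b) = max(|b_k|, sup_{k'≥1} |b_{|k−k'|} + b_{|k+k'|}|/(2ν^{k'})). Then for every v ∈ ℓ¹_ν with ‖v‖_{1,ν} ≤ 1 and every k ≥ 0, |(b ∗ v)_k| ≤ Q_k(b). -/

import Mathlib

/-- Membership in `ℓ¹_ν`. -/
def memL1 (ν : ℝ) (a : ℕ → ℝ) : Prop := Summable (fun k : ℕ => |a k| * ν ^ k)

/-- The weighted `ℓ¹_ν` norm `‖a‖ = |a₀| + 2∑_{k≥1}|a_k|ν^k`. -/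
noncomputable def wnorm (ν : ℝ) (a : ℕ → ℝ) : ℝ :=
  |a 0| + 2 * ∑' k : ℕ, |a (k + 1)| * ν ^ (k + 1)

/-- Symmetrized discrete convolution `(b∗v)_k = ∑_{k'∈ℤ} v_{|k'|} b_{|k−k'|}`. -/
noncomputable def conv (b v : ℕ → ℝ) (k : ℕ) : ℝ :=
  ∑' j : ℤ, v j.natAbs * b ((k : ℤ) - j).natAbs

/-- The bound `Q_k(b) = max(|b_k|, sup_{k'≥1} |b_{|k−k'|} + b_{|k+k'|}|/(2ν^{k'}))`. -/
noncomputable def Qbound (ν : ℝ) (b : ℕ → ℝ) (k : ℕ) : ℝ :=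
  max |b k| (⨆ k' : ℕ, |b ((k : ℤ) - (k' + 1)).natAbs + b (k + (k' + 1))| / (2 * ν ^ (k' + 1)))

set_option maxHeartbeats 1000000

/-- For `‖v‖_{1,ν} ≤ 1` we have `|(b ∗ v)_k| ≤ Q_k(b)` for every `k ≥ 0`. -/
theorem conv_Q_bound (ν : ℝ) (hν : 1 ≤ ν) (b v : ℕ → ℝ)
    (hb : memL1 ν b) (hv : memL1 ν v) (hv1 : wnorm ν v ≤ 1) :
    ∀ k : ℕ, |conv b v k| ≤ Qbound ν b k := by
  intro k
  have hν0 : (0:ℝ) < ν := lt_of_lt_of_le one_pos hν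
  have hνn : ∀ n : ℕ, (1:ℝ) ≤ ν ^ n := fun n => one_le_pow₀ hν
  have hνnpos : ∀ n : ℕ, (0:ℝ) < ν ^ n := fun n => pow_pos hν0 n
  set T : ℝ := ∑' n : ℕ, |b n| * ν ^ n with hT
  have hT0 : 0 ≤ T := tsum_nonneg fun n => mul_nonneg (abs_nonneg _) (hνnpos n).le
  have hbT : ∀ n : ℕ, |b n| ≤ T := by
    intro n
    calc |b n| ≤ |b n| * ν ^ n := le_mul_of_one_le_right (abs_nonneg _) (hνn n)
    _ ≤ T := Summable.le_tsum hb n fun m _ => mul_nonneg (abs_nonneg _) (hνnpos m).le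
  set Q : ℝ := Qbound ν b k with hQdef
  have hQ0 : 0 ≤ Q := le_trans (abs_nonneg _) (le_max_left _ _)
  -- boundedness of the sup
  have hbdd : BddAbove (Set.range fun k' : ℕ =>
      |b ((k : ℤ) - (k' + 1)).natAbs + b (k + (k' + 1))| / (2 * ν ^ (k' + 1))) := by
    refine ⟨T, ?_⟩
    rintro x ⟨n, rfl⟩
    rw [div_le_iff₀ (by positivity)]
    calc |b ((k : ℤ) - (n + 1)).natAbs + b (k + (n + 1))|
        ≤ |b ((k : ℤ) - (n + 1)).natAbs| + |b (k + (n + 1))| := abs_add_le _ _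
      _ ≤ T + T := add_le_add (hbT _) (hbT _)
      _ = T * 2 := by ring
      _ ≤ T * (2 * ν ^ (n + 1)) := by
          have := hνn (n + 1); nlinarith
  have hQsup : ∀ n : ℕ,
      |b ((k : ℤ) - (n + 1)).natAbs + b (k + (n + 1))| / (2 * ν ^ (n + 1)) ≤ Q :=
    fun n => le_trans (le_ciSup hbdd n) (le_max_right _ _)
  have hQk : |b k| ≤ Q := le_max_left _ _
  -- summability facts
  have hvabs : Summable (fun n : ℕ => |v n|) := by
    refine Summable.of_nonneg_of_le (fun n => abs_nonneg _) (fun n =>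
      le_mul_of_one_le_right (abs_nonneg _) (hνn n)) hv
  set f : ℤ → ℝ := fun j => v j.natAbs * b ((k : ℤ) - j).natAbs with hf
  have habs : ∀ j : ℤ, |f j| ≤ |v j.natAbs| * T := by
    intro j
    rw [abs_mul]
    exact mul_le_mul_of_nonneg_left (hbT _) (abs_nonneg _)
  have hgnat : Summable (fun n : ℕ => |v n| * T) := hvabs.mul_right T
  have hgsum : Summable (fun j : ℤ => |v j.natAbs| * T) := by
    apply Summable.of_nat_of_neg_add_one
    · simpa using hgnat
    · have h1 : (fun n : ℕ => |v ((-(n + 1) : ℤ)).natAbs| * T)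
          = fun n : ℕ => |v (n + 1)| * T := by
        funext n
        rw [show ((-(↑n + 1) : ℤ)).natAbs = n + 1 by omega]
      rw [h1]
      exact (summable_nat_add_iff 1).2 hgnat
  have hfsum : Summable f := by
    apply Summable.of_norm_bounded hgsum
    intro j
    simpa [Real.norm_eq_abs] using habs j
  have hfn : Summable (fun n : ℕ => f n) :=
    hfsum.comp_injective (fun a b h => by exact_mod_cast h)
  have hfneg : Summable (fun n : ℕ => f (-(n + 1))) :=
    hfsum.comp_injective (fun a b h => by omega)
  have hfn1 : Summable (fun n : ℕ => f (n + 1)) := (summable_nat_add_iff 1).2 hfn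
  -- split the tsum
  have hsplit : conv b v k = f 0 + ∑' n : ℕ, (f (n + 1) + f (-(n + 1))) := by
    have h0 : conv b v k = ∑' j : ℤ, f j := rfl
    rw [h0, tsum_of_nat_of_neg_add_one hfn hfneg, Summable.tsum_eq_zero_add hfn,
      Summable.tsum_add hfn1 hfneg]
    have hc : (∑' n : ℕ, f (↑(n + 1))) = ∑' n : ℕ, f ((n : ℤ) + 1) := by
      norm_cast
    rw [hc, Nat.cast_zero]
    ring
  -- pointwise identity for paired terms
  have hpair : ∀ n : ℕ, f (n + 1) + f (-(n + 1)) =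
      v (n + 1) * (b ((k : ℤ) - (n + 1)).natAbs + b (k + (n + 1))) := by
    intro n
    have h1 : ((-(n + 1) : ℤ)).natAbs = n + 1 := by omega
    have h2 : (((n : ℤ) + 1)).natAbs = n + 1 := by omega
    have h3 : ((k : ℤ) - -((n : ℤ) + 1)).natAbs = k + (n + 1) := by omega
    simp only [hf, h1, h2, h3]
    ring
  -- bound the paired terms
  have hterm : ∀ n : ℕ, |f (n + 1) + f (-(n + 1))| ≤ 2 * (|v (n + 1)| * ν ^ (n + 1)) * Q := by
    intro n
    rw [hpair n, abs_mul]
    have hp := hνnpos (n + 1)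
    calc |v (n + 1)| * |b ((k : ℤ) - (n + 1)).natAbs + b (k + (n + 1))|
        = 2 * (|v (n + 1)| * ν ^ (n + 1)) *
            (|b ((k : ℤ) - (n + 1)).natAbs + b (k + (n + 1))| / (2 * ν ^ (n + 1))) := by
          field_simp
      _ ≤ 2 * (|v (n + 1)| * ν ^ (n + 1)) * Q := by
          refine mul_le_mul_of_nonneg_left (hQsup n) (by positivity)
  have hbound : Summable (fun n : ℕ => 2 * (|v (n + 1)| * ν ^ (n + 1)) * Q) := by
    have : Summable (fun n : ℕ => |v (n + 1)| * ν ^ (n + 1)) := (summable_nat_add_iff 1).2 hv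
    exact (this.mul_left 2).mul_right Q
  have hsum_abs : |∑' n : ℕ, (f (n + 1) + f (-(n + 1)))| ≤
      ∑' n : ℕ, 2 * (|v (n + 1)| * ν ^ (n + 1)) * Q := by
    have h1 : |∑' n : ℕ, (f (n + 1) + f (-(n + 1)))| ≤
        ∑' n : ℕ, |f (n + 1) + f (-(n + 1))| := by
      simpa [Real.norm_eq_abs] using
        norm_tsum_le_tsum_norm (f := fun n : ℕ => f (n + 1) + f (-(n + 1)))
          (by simpa [Real.norm_eq_abs] using (hfn1.add hfneg).abs)
    refine le_trans h1 (Summable.tsum_le_tsum (fun n => hterm n) (hfn1.add hfneg).abs hbound)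
  have hf0 : |f 0| ≤ |v 0| * Q := by
    have : f 0 = v 0 * b k := by simp [hf]
    rw [this, abs_mul]
    exact mul_le_mul_of_nonneg_left hQk (abs_nonneg _)
  calc |conv b v k| = |f 0 + ∑' n : ℕ, (f (n + 1) + f (-(n + 1)))| := by rw [hsplit]
    _ ≤ |f 0| + |∑' n : ℕ, (f (n + 1) + f (-(n + 1)))| := abs_add_le _ _
    _ ≤ |v 0| * Q + ∑' n : ℕ, 2 * (|v (n + 1)| * ν ^ (n + 1)) * Q :=
        add_le_add hf0 hsum_abs
    _ = wnorm ν v * Q := by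
        rw [wnorm]
        rw [show (fun n : ℕ => 2 * (|v (n + 1)| * ν ^ (n + 1)) * Q)
            = fun n : ℕ => (|v (n + 1)| * ν ^ (n + 1)) * (2 * Q) by funext n; ring,
          tsum_mul_right]
        ring
    _ ≤ 1 * Q := mul_le_mul_of_nonneg_right hv1 hQ0
    _ = Q := one_mul Q
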